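/- Let (X,f) be a TDS and φ, ψ ∈ C(X,ℝ) with ψ > 0. Define for T > 0: G_T = {n ∈ ℕ : ∃x, S_nψ(x) > T}, Y_n = {x : S_nψ(x) > T}, and R_{ψ,T}(f,φ,ε) = sup{ Σ_{n∈G_T} Σ_{x∈E'_n} exp(S_nφ(x)) : E'_n (n,ε)-separated set of Y_n }. Then P_ψ(φ) = inf{ β ∈ ℝ : lim_{ε→0} limsup_{T→∞} R_{ψ,T}(f, φ − βψ, ε) < ∞ } (with inf ∅ = ∞). -/

import Mathlib

open MeasureTheory Filter Topology Set

variable {X : Type*}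

/-- Birkhoff sum `S_n φ (x) = ∑_{i<n} φ(f^i x)`. -/
noncomputable def birkhoff (f : X → X) (φ : X → ℝ) (n : ℕ) (x : X) : ℝ :=
  ∑ i ∈ Finset.range n, φ (f^[i] x)

/-- The `n`-th Bowen metric. -/
noncomputable def dynDist [MetricSpace X] (f : X → X) (n : ℕ) (x y : X) : ℝ :=
  ⨆ i : Fin n, dist (f^[(i : ℕ)] x) (f^[(i : ℕ)] y)

/-- `F` is an `(n,ε)`-spanning set of `Z`. -/
def IsSpanningSet [MetricSpace X] (f : X → X) (n : ℕ) (ε : ℝ) (Z : Set X) (F : Finset X) : Prop :=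
  ∀ y ∈ Z, ∃ x ∈ F, dynDist f n x y ≤ ε

/-- `E` is `(n,ε)`-separated. -/
def IsSeparatedSet [MetricSpace X] (f : X → X) (n : ℕ) (ε : ℝ) (E : Finset X) : Prop :=
  ∀ x ∈ E, ∀ y ∈ E, x ≠ y → ε < dynDist f n x y

/-- `S_T = {n : ∃ x, S_n ψ(x) ≤ T < S_{n+1} ψ(x)}`. -/
def STset (f : X → X) (ψ : X → ℝ) (T : ℝ) : Set ℕ :=
  {n | ∃ x : X, birkhoff f ψ n x ≤ T ∧ T < birkhoff f ψ (n + 1) x}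

/-- `X_n = {x : S_n ψ(x) ≤ T < S_{n+1} ψ(x)}`. -/
def Xset (f : X → X) (ψ : X → ℝ) (T : ℝ) (n : ℕ) : Set X :=
  {x | birkhoff f ψ n x ≤ T ∧ T < birkhoff f ψ (n + 1) x}

/-- `Q_{ψ,T}(f,φ,ε)`, the spanning-set quantity. -/
noncomputable def Qspan [MetricSpace X] (f : X → X) (φ ψ : X → ℝ) (T ε : ℝ) : ℝ :=
  sInf { r : ℝ | ∃ F : ℕ → Finset X,
    (∀ n ∈ STset f ψ T, IsSpanningSet f n ε (Xset f ψ T n) (F n)) ∧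
    r = ∑' n : ℕ, Set.indicator (STset f ψ T)
        (fun n => ∑ x ∈ F n, Real.exp (birkhoff f φ n x)) n }

/-- `P_{ψ,T}(f,φ,ε)`, the separated-set quantity. -/
noncomputable def Psep [MetricSpace X] (f : X → X) (φ ψ : X → ℝ) (T ε : ℝ) : ℝ :=
  sSup { r : ℝ | ∃ E : ℕ → Finset X,
    (∀ n ∈ STset f ψ T, (E n : Set X) ⊆ Xset f ψ T n ∧ IsSeparatedSet f n ε (E n)) ∧
    r = ∑' n : ℕ, Set.indicator (STset f ψ T)
        (fun n => ∑ x ∈ E n, Real.exp (birkhoff f φ n x)) n }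

/-- The `ψ`-induced topological pressure of `φ`. -/
noncomputable def inducedPressure [MetricSpace X] (f : X → X) (φ ψ : X → ℝ) : EReal :=
  ⨆ (ε : ℝ) (_ : 0 < ε),
    Filter.limsup (fun T : ℝ => ((T⁻¹ * Real.log (Qspan f φ ψ T ε) : ℝ) : EReal)) atTop

/-- Largest sum over `(n,ε)`-separated sets of `X`. -/
noncomputable def sepSum [MetricSpace X] (f : X → X) (φ : X → ℝ) (n : ℕ) (ε : ℝ) : ℝ :=
  sSup { r : ℝ | ∃ E : Finset X, IsSeparatedSet f n ε E ∧
    r = ∑ x ∈ E, Real.exp (birkhoff f φ n x) }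

/-- The classical (Walters) topological pressure. -/
noncomputable def topPressure [MetricSpace X] (f : X → X) (φ : X → ℝ) : EReal :=
  ⨆ (ε : ℝ) (_ : 0 < ε),
    Filter.limsup (fun n : ℕ => (((n : ℝ)⁻¹ * Real.log (sepSum f φ n ε) : ℝ) : EReal)) atTop

/-- `G_T = {n : ∃ x, S_n ψ(x) > T}`. -/
def GTset (f : X → X) (ψ : X → ℝ) (T : ℝ) : Set ℕ :=
  {n | ∃ x : X, T < birkhoff f ψ n x}

/-- `Y_n = {x : S_n ψ(x) > T}`. -/
def Yset (f : X → X) (ψ : X → ℝ) (T : ℝ) (n : ℕ) : Set X :=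
  {x | T < birkhoff f ψ n x}

/-- `R_{ψ,T}(f,φ,ε)`: supremum over `(n,ε)`-separated subsets of `Y_n`, `n ∈ G_T`. -/
noncomputable def Rsep [MetricSpace X] (f : X → X) (φ ψ : X → ℝ) (T ε : ℝ) : ENNReal :=
  ⨆ (E : ℕ → Finset X)
    (_ : ∀ n ∈ GTset f ψ T, (E n : Set X) ⊆ Yset f ψ T n ∧ IsSeparatedSet f n ε (E n)),
    ∑' n : ℕ, Set.indicator (GTset f ψ T)
      (fun n => ENNReal.ofReal (∑ x ∈ E n, Real.exp (birkhoff f φ n x))) n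










lemma birkhoff_succ (f : X → X) (ψ : X → ℝ) (n : ℕ) (x : X) :
    birkhoff f ψ (n+1) x = birkhoff f ψ n x + ψ (f^[n] x) :=
  Finset.sum_range_succ _ _

lemma birkhoff_le (f : X → X) {ψ : X → ℝ} {M : ℝ} (h : ∀ y, ψ y ≤ M) (n : ℕ) (x : X) :
    birkhoff f ψ n x ≤ n * M := by
  calc birkhoff f ψ n x ≤ ∑ _i ∈ Finset.range n, M := Finset.sum_le_sum fun i _ => h _
  _ = n * M := by simp [mul_comm]

lemma birkhoff_ge (f : X → X) {ψ : X → ℝ} {m : ℝ} (h : ∀ y, m ≤ ψ y) (n : ℕ) (x : X) :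
    (n : ℝ) * m ≤ birkhoff f ψ n x := by
  calc (n:ℝ) * m = ∑ _i ∈ Finset.range n, m := by simp [mul_comm]
  _ ≤ birkhoff f ψ n x := Finset.sum_le_sum fun i _ => h _

lemma birkhoff_sub (f : X → X) (φ ψ : X → ℝ) (β : ℝ) (n : ℕ) (x : X) :
    birkhoff f (fun x => φ x - β * ψ x) n x = birkhoff f φ n x - β * birkhoff f ψ n x := by
  simp [birkhoff, Finset.sum_sub_distrib, Finset.mul_sum]

lemma dynDist_nonneg [MetricSpace X] (f : X → X) (n : ℕ) (x y : X) :
    0 ≤ dynDist f n x y := by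
  rcases Nat.eq_zero_or_pos n with h | h
  · subst h; simp [dynDist, Real.iSup_of_isEmpty]
  · exact le_trans dist_nonneg
      (le_ciSup (f := fun i : Fin n => dist (f^[(i:ℕ)] x) (f^[(i:ℕ)] y))
        (Set.Finite.bddAbove (Set.finite_range _)) (⟨0, h⟩ : Fin n))

lemma dynDist_comm [MetricSpace X] (f : X → X) (n : ℕ) (x y : X) :
    dynDist f n x y = dynDist f n y x := by
  unfold dynDist; congr 1; ext i; exact dist_comm _ _

lemma dist_le_dynDist [MetricSpace X] (f : X → X) {n : ℕ} (i : Fin n) (x y : X) :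
    dist (f^[(i:ℕ)] x) (f^[(i:ℕ)] y) ≤ dynDist f n x y :=
  le_ciSup (f := fun i : Fin n => dist (f^[(i:ℕ)] x) (f^[(i:ℕ)] y))
    (Set.Finite.bddAbove (Set.finite_range _)) i

lemma dynDist_triangle [MetricSpace X] (f : X → X) (n : ℕ) (x y z : X) :
    dynDist f n x z ≤ dynDist f n x y + dynDist f n y z := by
  rcases Nat.eq_zero_or_pos n with h | h
  · subst h
    simpa [dynDist, Real.iSup_of_isEmpty] using
      add_nonneg (dynDist_nonneg f 0 x y) (dynDist_nonneg f 0 y z)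
  · have : Nonempty (Fin n) := ⟨⟨0, h⟩⟩
    apply ciSup_le
    intro i
    exact le_trans (dist_triangle _ (f^[(i:ℕ)] y) _)
      (add_le_add (dist_le_dynDist f i x y) (dist_le_dynDist f i y z))

lemma dynDist_self [MetricSpace X] (f : X → X) (n : ℕ) (x : X) :
    dynDist f n x x = 0 := by
  rcases Nat.eq_zero_or_pos n with h | h
  · subst h; simp [dynDist, Real.iSup_of_isEmpty]
  · simp [dynDist]





/-- A finite `(n,ε)`-spanning set of the whole space exists. -/
lemma exists_spanning [MetricSpace X] [CompactSpace X] {f : X → X} (hf : Continuous f)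
    (n : ℕ) {ε : ℝ} (hε : 0 < ε) : ∃ F : Finset X, IsSpanningSet f n ε Set.univ F := by
  -- uniform continuity of all iterates i < n
  have huc : ∀ i : ℕ, UniformContinuous (f^[i]) :=
    fun i => CompactSpace.uniformContinuous_of_continuous (hf.iterate i)
  have hδ : ∀ i : ℕ, ∃ δ > 0, ∀ x y : X, dist x y < δ → dist (f^[i] x) (f^[i] y) ≤ ε := by
    intro i
    rcases Metric.uniformContinuous_iff.1 (huc i) ε hε with ⟨δ, hδ0, hδ⟩
    exact ⟨δ, hδ0, fun x y h => le_of_lt (hδ h)⟩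
  choose δ hδ0 hδspec using hδ
  -- take min over i < n
  set δ₀ : ℝ := if h : n = 0 then 1 else (Finset.range n).inf' (by simp [h]) δ with hδ₀def
  have hδ₀pos : 0 < δ₀ := by
    rw [hδ₀def]
    split
    · norm_num
    · next h => exact (Finset.lt_inf'_iff _).2 fun i _ => hδ0 i
  have hδ₀le : ∀ i < n, δ₀ ≤ δ i := by
    intro i hi
    rw [hδ₀def]
    split
    · omega
    · exact Finset.inf'_le _ (Finset.mem_range.2 hi)
  -- finite δ₀-net
  obtain ⟨t, -, htfin, hcov⟩ := finite_cover_balls_of_compact (isCompact_univ (X := X)) hδ₀pos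
  classical
  obtain ⟨F, hF⟩ := Set.Finite.exists_finset_coe htfin
  refine ⟨F, fun y _ => ?_⟩
  have : y ∈ ⋃ x ∈ t, Metric.ball x δ₀ := hcov (Set.mem_univ y)
  simp only [Set.mem_iUnion] at this
  obtain ⟨x, hxt, hxy⟩ := this
  refine ⟨x, by rw [← hF] at hxt; exact_mod_cast hxt, ?_⟩
  rcases Nat.eq_zero_or_pos n with hn | hn
  · subst hn; simp [dynDist, Real.iSup_of_isEmpty]; positivity
  · have : Nonempty (Fin n) := ⟨⟨0, hn⟩⟩
    apply ciSup_le
    intro i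
    have hd : dist x y < δ (i : ℕ) := by
      have h1 : dist x y < δ₀ := by rw [dist_comm]; exact Metric.mem_ball.1 hxy
      exact lt_of_lt_of_le h1 (hδ₀le _ i.2)
    exact hδspec (i : ℕ) x y hd

/-- Separated sets have cardinality bounded by any `(n, ε/2)`-spanning set of `univ`. -/
lemma card_le_of_separated [MetricSpace X] {f : X → X} {n : ℕ} {ε : ℝ} (hε : 0 < ε)
    {E F : Finset X} (hE : IsSeparatedSet f n ε E) (hF : IsSpanningSet f n (ε/2) Set.univ F) :
    E.card ≤ F.card := by
  classical
  have hg : ∀ x : X, ∃ y, y ∈ F ∧ dynDist f n y x ≤ ε/2 := by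
    intro x
    obtain ⟨y, hy1, hy2⟩ := hF x (Set.mem_univ x)
    exact ⟨y, hy1, hy2⟩
  choose g hgF hgd using hg
  apply Finset.card_le_card_of_injOn g (fun x hx => hgF x)
  intro x hx y hy hxy
  by_contra hne
  have h1 : dynDist f n x y ≤ ε := by
    calc dynDist f n x y ≤ dynDist f n x (g x) + dynDist f n (g x) y :=
      dynDist_triangle f n x (g x) y
    _ = dynDist f n (g x) x + dynDist f n (g y) y := by rw [dynDist_comm, hxy]
    _ ≤ ε/2 + ε/2 := add_le_add (hgd x) (hgd y)
    _ = ε := by ring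
  exact absurd h1 (not_le.2 (hE x hx y hy hne))

/-- Existence of a maximal `(n,ε)`-separated subset of `Z`; it `ε`-spans `Z`. -/
lemma exists_maximal_separated [MetricSpace X] [CompactSpace X] {f : X → X} (hf : Continuous f)
    (n : ℕ) {ε : ℝ} (hε : 0 < ε) (Z : Set X) :
    ∃ E : Finset X, ↑E ⊆ Z ∧ IsSeparatedSet f n ε E ∧
      ∀ z ∈ Z, ∃ x ∈ E, dynDist f n x z ≤ ε := by
  classical
  obtain ⟨F, hF⟩ := exists_spanning hf n (half_pos hε)
  set 𝒮 : Set (Finset X) := {E | ↑E ⊆ Z ∧ IsSeparatedSet f n ε E} with h𝒮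
  have hbdd : ∀ E ∈ 𝒮, E.card ≤ F.card := fun E hE => card_le_of_separated hε hE.2 hF
  set c : Set ℕ := Finset.card '' 𝒮 with hc
  have hcne : c.Nonempty := ⟨0, ⟨∅, ⟨by simp, by intro x hx; simp at hx⟩, rfl⟩⟩
  have hcbd : BddAbove c := ⟨F.card, by rintro - ⟨E, hE, rfl⟩; exact hbdd E hE⟩
  have hmem := Nat.sSup_mem hcne hcbd
  obtain ⟨E, hE𝒮, hEcard⟩ := hmem
  refine ⟨E, hE𝒮.1, hE𝒮.2, ?_⟩
  intro z hz
  by_contra hcon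
  push_neg at hcon
  have hzE : z ∉ E := fun h => absurd (dynDist_self f n z ▸ hcon z h) (not_lt.2 (le_of_lt hε)).elim
  · have hsep : IsSeparatedSet f n ε (insert z E) := by
      intro x hx y hy hxy
      rcases Finset.mem_insert.1 hx with hx1 | hx1
      · rcases Finset.mem_insert.1 hy with hy1 | hy1
        · exact absurd (hx1.trans hy1.symm) hxy
        · subst hx1; rw [dynDist_comm]; exact hcon y hy1
      · rcases Finset.mem_insert.1 hy with hy1 | hy1
        · subst hy1; exact hcon x hx1
        · exact hE𝒮.2 x hx1 y hy1 hxy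
    have hins : (insert z E : Finset X) ∈ 𝒮 := by
      refine ⟨?_, hsep⟩
      intro x hx
      simp only [Finset.coe_insert, Set.mem_insert_iff] at hx
      rcases hx with rfl | hx
      · exact hz
      · exact hE𝒮.1 hx
    have : (insert z E).card ≤ sSup c := le_csSup hcbd ⟨_, hins, rfl⟩
    rw [Finset.card_insert_of_notMem hzE, hEcard] at this
    omega

/-- Comparison of exponential sums over a separated subset of `Z` and a spanning set of `Z`. -/
lemma sum_exp_le_of_separated_spanning [MetricSpace X] {f : X → X} {φ : X → ℝ} {n : ℕ}
    {ε γ : ℝ} (hε : 0 < ε) (hγ0 : 0 ≤ γ)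
    (hγ : ∀ x y : X, dist x y ≤ ε/2 → |φ x - φ y| ≤ γ)
    {Z : Set X} {E F : Finset X} (hEZ : ↑E ⊆ Z) (hE : IsSeparatedSet f n ε E)
    (hF : IsSpanningSet f n (ε/2) Z F) :
    ∑ x ∈ E, Real.exp (birkhoff f φ n x) ≤
      Real.exp (n * γ) * ∑ y ∈ F, Real.exp (birkhoff f φ n y) := by
  classical
  have hg : ∀ x : X, ∃ y : X, x ∈ E → (y ∈ F ∧ dynDist f n y x ≤ ε/2) := by
    intro x
    by_cases hx : x ∈ E
    · obtain ⟨y, hy1, hy2⟩ := hF x (hEZ hx)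
      exact ⟨y, fun _ => ⟨hy1, hy2⟩⟩
    · exact ⟨x, fun h => absurd h hx⟩
  choose g hgspec using hg
  have hgF : ∀ x ∈ E, g x ∈ F := fun x hx => (hgspec x hx).1
  have hgd : ∀ x ∈ E, dynDist f n (g x) x ≤ ε/2 := fun x hx => (hgspec x hx).2
  -- pointwise Birkhoff comparison
  have hkey : ∀ x ∈ E, birkhoff f φ n x ≤ birkhoff f φ n (g x) + n * γ := by
    intro x hx
    have : birkhoff f φ n x - birkhoff f φ n (g x) ≤ n * γ := by
      calc birkhoff f φ n x - birkhoff f φ n (g x)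
          = ∑ i ∈ Finset.range n, (φ (f^[i] x) - φ (f^[i] (g x))) := by
            simp [birkhoff, Finset.sum_sub_distrib]
        _ ≤ ∑ _i ∈ Finset.range n, γ := by
            apply Finset.sum_le_sum
            intro i hi
            have hi' : (i : ℕ) < n := Finset.mem_range.1 hi
            have hdist : dist (f^[i] x) (f^[i] (g x)) ≤ ε/2 := by
              have := dist_le_dynDist f (⟨i, hi'⟩ : Fin n) (g x) x
              calc dist (f^[i] x) (f^[i] (g x)) = dist (f^[i] (g x)) (f^[i] x) := dist_comm _ _
                _ ≤ dynDist f n (g x) x := this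
                _ ≤ ε/2 := hgd x hx
            exact le_trans (le_abs_self _) (hγ _ _ hdist)
        _ = n * γ := by simp [mul_comm]
    linarith
  -- injectivity of g on E
  have hinj : ∀ x₁ ∈ E, ∀ x₂ ∈ E, g x₁ = g x₂ → x₁ = x₂ := by
    intro x₁ h₁ x₂ h₂ heq
    by_contra hne
    have : dynDist f n x₁ x₂ ≤ ε := by
      calc dynDist f n x₁ x₂ ≤ dynDist f n x₁ (g x₁) + dynDist f n (g x₁) x₂ :=
        dynDist_triangle f n _ _ _
      _ = dynDist f n (g x₁) x₁ + dynDist f n (g x₂) x₂ := by rw [dynDist_comm, heq]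
      _ ≤ ε/2 + ε/2 := add_le_add (hgd _ h₁) (hgd _ h₂)
      _ = ε := by ring
    exact absurd this (not_le.2 (hE x₁ h₁ x₂ h₂ hne))
  calc ∑ x ∈ E, Real.exp (birkhoff f φ n x)
      ≤ ∑ x ∈ E, Real.exp (n * γ) * Real.exp (birkhoff f φ n (g x)) := by
        apply Finset.sum_le_sum
        intro x hx
        rw [← Real.exp_add]
        exact Real.exp_le_exp.2 (by linarith [hkey x hx])
    _ = Real.exp (n * γ) * ∑ x ∈ E, Real.exp (birkhoff f φ n (g x)) := by
        rw [Finset.mul_sum]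
    _ ≤ Real.exp (n * γ) * ∑ y ∈ F, Real.exp (birkhoff f φ n y) := by
        apply mul_le_mul_of_nonneg_left _ (Real.exp_nonneg _)
        calc ∑ x ∈ E, Real.exp (birkhoff f φ n (g x))
            = ∑ y ∈ E.image g, Real.exp (birkhoff f φ n y) := by rw [Finset.sum_image hinj]
          _ ≤ ∑ y ∈ F, Real.exp (birkhoff f φ n y) := by
              apply Finset.sum_le_sum_of_subset_of_nonneg
              · intro y hy
                obtain ⟨x, hx, rfl⟩ := Finset.mem_image.1 hy
                exact hgF x hx
              · intro y _ _; exact Real.exp_nonneg _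









section STlemmas

variable {f : X → X} {ψ : X → ℝ} {m₀ : ℝ}

lemma stset_le (hm : ∀ y, m₀ ≤ ψ y) {T : ℝ} {n : ℕ} (hn : n ∈ STset f ψ T) :
    (n : ℝ) * m₀ ≤ T := by
  obtain ⟨x, hx1, _⟩ := hn
  exact le_trans (birkhoff_ge f hm n x) hx1

lemma stset_nonempty [Nonempty X] (hm : ∀ y, m₀ ≤ ψ y) (hm0 : 0 < m₀) {T : ℝ} (hT : 0 ≤ T) :
    (STset f ψ T).Nonempty := by
  obtain ⟨x⟩ := ‹Nonempty X›
  set s : Set ℕ := {n | birkhoff f ψ n x ≤ T} with hs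
  have h0 : 0 ∈ s := by simp [hs, birkhoff, hT]
  have hbd : BddAbove s := by
    refine ⟨⌊T / m₀⌋₊, fun n hn => ?_⟩
    have h1 : (n : ℝ) * m₀ ≤ T := le_trans (birkhoff_ge f hm n x) hn
    have h2 : (n : ℝ) ≤ T / m₀ := (le_div_iff₀ hm0).2 h1
    exact Nat.le_floor h2
  have hmem := Nat.sSup_mem ⟨0, h0⟩ hbd
  set N := sSup s with hN
  refine ⟨N, x, hmem, ?_⟩
  by_contra hcon
  push_neg at hcon
  have : N + 1 ∈ s := hcon
  have := le_csSup hbd this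
  omega

lemma grid_exists (hm : ∀ y, m₀ ≤ ψ y) (hm0 : 0 < m₀) {T : ℝ} {n : ℕ} {x : X}
    (hx : T < birkhoff f ψ n x) :
    ∃ k : ℕ, x ∈ Xset f ψ (T + (k + 1) * m₀) n := by
  set S := birkhoff f ψ n x with hS
  set j : ℕ := ⌈(S - T) / m₀⌉₊ with hj
  have harg : 0 < (S - T) / m₀ := div_pos (by linarith) hm0
  have hj1 : 1 ≤ j := Nat.one_le_iff_ne_zero.2 (by positivity)
  have hup : S ≤ T + (j : ℝ) * m₀ := by
    have := Nat.le_ceil ((S - T) / m₀)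
    have h2 : S - T ≤ (j : ℝ) * m₀ := by
      calc S - T = ((S - T) / m₀) * m₀ := by field_simp
        _ ≤ (j : ℝ) * m₀ := by nlinarith [Nat.le_ceil ((S - T) / m₀)]
    linarith
  have hlo : T + (j : ℝ) * m₀ < S + m₀ := by
    have hceil : (j : ℝ) < (S - T) / m₀ + 1 := Nat.ceil_lt_add_one (le_of_lt harg)
    have h4 : (j : ℝ) * m₀ < ((S - T) / m₀ + 1) * m₀ := mul_lt_mul_of_pos_right hceil hm0
    have h5 : ((S - T) / m₀) * m₀ = S - T := div_mul_cancel₀ _ (ne_of_gt hm0)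
    have h6 : ((S - T) / m₀ + 1) * m₀ = (S - T) + m₀ := by rw [add_mul, h5, one_mul]
    linarith
  refine ⟨j - 1, ?_, ?_⟩
  · have : ((j - 1 : ℕ) : ℝ) + 1 = (j : ℝ) := by
      have : (j - 1 : ℕ) + 1 = j := by omega
      exact_mod_cast congrArg (fun k : ℕ => (k : ℝ)) this
    rw [this]
    exact hup
  · have hjj : ((j - 1 : ℕ) : ℝ) + 1 = (j : ℝ) := by
      have : (j - 1 : ℕ) + 1 = j := by omega
      exact_mod_cast congrArg (fun k : ℕ => (k : ℝ)) this
    rw [hjj]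
    have hsucc : birkhoff f ψ (n + 1) x = S + ψ (f^[n] x) := birkhoff_succ f ψ n x
    have : S + m₀ ≤ birkhoff f ψ (n + 1) x := by
      rw [hsucc]; linarith [hm (f^[n] x)]
    linarith

lemma summable_indicator_stset (hm : ∀ y, m₀ ≤ ψ y) (hm0 : 0 < m₀) (T : ℝ) (g : ℕ → ℝ) :
    Summable (Set.indicator (STset f ψ T) g) := by
  apply summable_of_ne_finset_zero (s := Finset.range (⌊T / m₀⌋₊ + 1))
  intro n hn
  apply Set.indicator_of_notMem
  intro hmem
  have h1 : (n : ℝ) * m₀ ≤ T := stset_le hm hmem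
  have h2 : (n : ℝ) ≤ T / m₀ := (le_div_iff₀ hm0).2 h1
  have h3 : n ≤ ⌊T / m₀⌋₊ := Nat.le_floor h2
  simp only [Finset.mem_range] at hn
  omega

end STlemmas




def Qset [MetricSpace X] (f : X → X) (φ ψ : X → ℝ) (T ε : ℝ) : Set ℝ :=
  { r : ℝ | ∃ F : ℕ → Finset X,
    (∀ n ∈ STset f ψ T, IsSpanningSet f n ε (Xset f ψ T n) (F n)) ∧
    r = ∑' n : ℕ, Set.indicator (STset f ψ T)
        (fun n => ∑ x ∈ F n, Real.exp (birkhoff f φ n x)) n }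

lemma Qspan_eq [MetricSpace X] (f : X → X) (φ ψ : X → ℝ) (T ε : ℝ) :
    Qspan f φ ψ T ε = sInf (Qset f φ ψ T ε) := rfl

section Qlemmas

variable [MetricSpace X] [CompactSpace X] {f : X → X} {φ ψ : X → ℝ} {m₀ : ℝ}

lemma Qset_nonempty (hf : Continuous f) (T : ℝ) {ε : ℝ} (hε : 0 < ε) :
    (Qset f φ ψ T ε).Nonempty := by
  have h : ∀ n : ℕ, ∃ F : Finset X, IsSpanningSet f n ε Set.univ F :=
    fun n => exists_spanning hf n hε
  choose F hF using h
  exact ⟨_, F, fun n _ => fun y _ => hF n y (Set.mem_univ y), rfl⟩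

lemma Qset_nonneg {T ε : ℝ} {r : ℝ} (hr : r ∈ Qset f φ ψ T ε) : 0 ≤ r := by
  obtain ⟨F, -, rfl⟩ := hr
  apply tsum_nonneg
  intro n
  apply Set.indicator_nonneg
  intro n _
  exact Finset.sum_nonneg fun x _ => Real.exp_nonneg _

lemma Qspan_le {T ε : ℝ} {r : ℝ} (hr : r ∈ Qset f φ ψ T ε) : Qspan f φ ψ T ε ≤ r :=
  csInf_le ⟨0, fun s hs => Qset_nonneg hs⟩ hr

lemma Qspan_pos [Nonempty X] (hm : ∀ y, m₀ ≤ ψ y) (hm0 : 0 < m₀)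
    (hf : Continuous f) {c : ℝ} (hc : ∀ y, c ≤ φ y) (hc0 : c ≤ 0) {T : ℝ} (hT : 0 ≤ T)
    {ε : ℝ} (hε : 0 < ε) :
    Real.exp ((T / m₀) * c) ≤ Qspan f φ ψ T ε := by
  obtain ⟨n₀, hn₀⟩ := stset_nonempty hm hm0 hT
  apply le_csInf
  · exact Qset_nonempty hf T hε
  rintro r ⟨F, hFspan, rfl⟩
  obtain ⟨x₀, hx₀⟩ := hn₀
  obtain ⟨y, hyF, -⟩ := hFspan n₀ ⟨x₀, hx₀⟩ x₀ hx₀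
  have hterm : Real.exp ((T / m₀) * c) ≤
      Set.indicator (STset f ψ T)
        (fun n => ∑ x ∈ F n, Real.exp (birkhoff f φ n x)) n₀ := by
    have hrw := Set.indicator_of_mem (show n₀ ∈ STset f ψ T from ⟨x₀, hx₀⟩)
      (fun n => ∑ x ∈ F n, Real.exp (birkhoff f φ n x))
    rw [hrw]
    have h1 : Real.exp ((T / m₀) * c) ≤ Real.exp (birkhoff f φ n₀ y) := by
      apply Real.exp_le_exp.2
      have h2 : (n₀ : ℝ) * c ≤ birkhoff f φ n₀ y := birkhoff_ge f hc n₀ y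
      have h3 : (n₀ : ℝ) ≤ T / m₀ := (le_div_iff₀ hm0).2 (stset_le hm ⟨x₀, hx₀⟩)
      nlinarith
    calc Real.exp ((T / m₀) * c) ≤ Real.exp (birkhoff f φ n₀ y) := h1
      _ ≤ ∑ x ∈ F n₀, Real.exp (birkhoff f φ n₀ x) :=
        Finset.single_le_sum (fun x _ => Real.exp_nonneg _) hyF
  calc Real.exp ((T / m₀) * c) ≤ _ := hterm
    _ ≤ ∑' n : ℕ, Set.indicator (STset f ψ T)
        (fun n => ∑ x ∈ F n, Real.exp (birkhoff f φ n x)) n := by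
      apply Summable.le_tsum (summable_indicator_stset hm hm0 T _) n₀
      intro n _
      apply Set.indicator_nonneg
      intro n _
      exact Finset.sum_nonneg fun x _ => Real.exp_nonneg _

end Qlemmas



section Dir2

variable [MetricSpace X] [CompactSpace X] [Nonempty X]

lemma direction2 (f : X → X) (φ ψ : X → ℝ) (hf : Continuous f) (hφ : Continuous φ)
    (hψ : Continuous ψ) (hpos : ∀ x, 0 < ψ x) (β : ℝ)
    (hfin : (⨆ (ε : ℝ) (_ : 0 < ε),
        Filter.limsup (fun T : ℝ => Rsep f (fun x => φ x - β * ψ x) ψ T ε) atTop) < ⊤) :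
    inducedPressure f φ ψ ≤ (β : EReal) := by
  classical
  -- extremal values of ψ and φ
  obtain ⟨xm, -, hxm⟩ := isCompact_univ.exists_isMinOn Set.univ_nonempty hψ.continuousOn
  obtain ⟨xM, -, hxM⟩ := isCompact_univ.exists_isMaxOn Set.univ_nonempty hψ.continuousOn
  obtain ⟨xc, -, hxc⟩ := isCompact_univ.exists_isMinOn Set.univ_nonempty hφ.continuousOn
  set m₀ : ℝ := ψ xm with hm₀def
  set M : ℝ := ψ xM with hMdef
  have hm : ∀ y, m₀ ≤ ψ y := fun y => hxm (Set.mem_univ y)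
  have hM : ∀ y, ψ y ≤ M := fun y => hxM (Set.mem_univ y)
  have hm0 : 0 < m₀ := hpos xm
  set c : ℝ := min (φ xc) 0 with hcdef
  have hc : ∀ y, c ≤ φ y := fun y => le_trans (min_le_left _ _) (hxc (Set.mem_univ y))
  have hc0 : c ≤ 0 := min_le_right _ _
  -- it suffices to bound each limsup
  refine iSup₂_le fun ε hε => ?_
  -- finiteness of the limsup of Rsep at scale ε
  have hL : Filter.limsup (fun T : ℝ => Rsep f (fun x => φ x - β * ψ x) ψ T ε) atTop < ⊤ :=
    lt_of_le_of_lt (le_iSup₂ (f := fun (ε : ℝ) (_ : 0 < ε) =>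
      Filter.limsup (fun T : ℝ => Rsep f (fun x => φ x - β * ψ x) ψ T ε) atTop) ε hε) hfin
  set L := Filter.limsup (fun T : ℝ => Rsep f (fun x => φ x - β * ψ x) ψ T ε) atTop with hLdef
  set K' : ENNReal := L + 1 with hK'def
  have hK'top : K' ≠ ⊤ := by
    rw [hK'def]; exact ENNReal.add_ne_top.2 ⟨hL.ne, ENNReal.one_ne_top⟩
  have hLK : L < K' := ENNReal.lt_add_right hL.ne one_ne_zero
  have hev : ∀ᶠ T in (atTop : Filter ℝ), Rsep f (fun x => φ x - β * ψ x) ψ T ε < K' :=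
    Filter.eventually_lt_of_limsup_lt hLK
  set K : ℝ := K'.toReal with hKdef
  have hK1 : 1 ≤ K := by
    rw [hKdef, hK'def]
    rw [ENNReal.toReal_add hL.ne ENNReal.one_ne_top, ENNReal.toReal_one]
    have := ENNReal.toReal_nonneg (a := L)
    linarith
  set C : ℝ := |β| * M + Real.log K with hCdef
  -- the key eventual estimate
  have hkey : ∀ T : ℝ, 1 ≤ T → Rsep f (fun x => φ x - β * ψ x) ψ (T - M) ε < K' →
      T⁻¹ * Real.log (Qspan f φ ψ T ε) ≤ β + C * T⁻¹ := by
    intro T hT1 hRT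
    have hT0 : (0:ℝ) < T := lt_of_lt_of_le one_pos hT1
    have hTnn : (0:ℝ) ≤ T := le_of_lt hT0
    -- maximal separated subsets of the X_n
    have hmax : ∀ n : ℕ, ∃ E : Finset X, ↑E ⊆ Xset f ψ T n ∧ IsSeparatedSet f n ε E ∧
        ∀ z ∈ Xset f ψ T n, ∃ x ∈ E, dynDist f n x z ≤ ε :=
      fun n => exists_maximal_separated hf n hε (Xset f ψ T n)
    choose En hEnsub hEnsep hEnspan using hmax
    set w : ℕ → ℝ := fun n => ∑ x ∈ En n, Real.exp (birkhoff f φ n x) with hwdef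
    set w' : ℕ → ℝ := fun n =>
      ∑ x ∈ En n, Real.exp (birkhoff f (fun x => φ x - β * ψ x) n x) with hw'def
    set r : ℝ := ∑' n : ℕ, Set.indicator (STset f ψ T) w n with hrdef
    set r' : ℝ := ∑' n : ℕ, Set.indicator (STset f ψ T) w' n with hr'def
    -- Q ≤ r
    have hQr : Qspan f φ ψ T ε ≤ r :=
      Qspan_le ⟨En, fun n hn => hEnspan n, hrdef⟩
    -- pointwise: on Xset, β * S_nψ x ≤ β T + |β| M
    have hβb : ∀ n : ℕ, ∀ x ∈ Xset f ψ T n, β * birkhoff f ψ n x ≤ β * T + |β| * M := by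
      intro n x hx
      obtain ⟨hx1, hx2⟩ := hx
      rcases le_or_gt 0 β with hβ | hβ
      · have := mul_le_mul_of_nonneg_left hx1 hβ
        have hMnn : 0 ≤ |β| * M := by
          apply mul_nonneg (abs_nonneg β)
          exact le_trans (le_of_lt (hpos xM)) (le_refl M)
        linarith
      · have hS : T - M < birkhoff f ψ n x := by
          have hsucc : birkhoff f ψ (n+1) x = birkhoff f ψ n x + ψ (f^[n] x) :=
            birkhoff_succ f ψ n x
          have := hM (f^[n] x)
          linarith
        have h1 : β * birkhoff f ψ n x ≤ β * (T - M) :=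
          (mul_le_mul_left_of_neg hβ).2 (le_of_lt hS)
        have h2 : β * (T - M) = β * T + (-β) * M := by ring
        rw [abs_of_neg hβ]
        linarith
    -- r ≤ exp(βT + |β|M) * r'
    have hrr' : r ≤ Real.exp (β * T + |β| * M) * r' := by
      rw [hrdef, hr'def, ← tsum_mul_left]
      apply Summable.tsum_le_tsum _ (summable_indicator_stset hm hm0 T w)
        ((summable_indicator_stset hm hm0 T w').mul_left _)
      intro n
      by_cases hn : n ∈ STset f ψ T
      · rw [Set.indicator_of_mem hn, Set.indicator_of_mem hn]
        rw [hwdef, hw'def]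
        simp only
        rw [Finset.mul_sum]
        apply Finset.sum_le_sum
        intro x hx
        rw [birkhoff_sub, ← Real.exp_add]
        apply Real.exp_le_exp.2
        have := hβb n x (hEnsub n hx)
        linarith
      · rw [Set.indicator_of_notMem hn, Set.indicator_of_notMem hn, mul_zero]
    -- r' ≤ K via Rsep
    have hr'K : r' ≤ K := by
      set E' : ℕ → Finset X := fun n => if n ∈ STset f ψ T then En n else ∅ with hE'def
      have hadm : ∀ n ∈ GTset f ψ (T - M), (E' n : Set X) ⊆ Yset f ψ (T - M) n ∧
          IsSeparatedSet f n ε (E' n) := by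
        intro n _
        rw [hE'def]
        by_cases hn : n ∈ STset f ψ T
        · simp only [if_pos hn]
          constructor
          · intro x hx
            have hx' := hEnsub n hx
            obtain ⟨hx1, hx2⟩ := hx'
            have hsucc : birkhoff f ψ (n+1) x = birkhoff f ψ n x + ψ (f^[n] x) :=
              birkhoff_succ f ψ n x
            have := hM (f^[n] x)
            show T - M < birkhoff f ψ n x
            linarith
          · exact hEnsep n
        · simp only [if_neg hn]
          exact ⟨by simp, fun x hx => by simp at hx⟩
      have hle : (∑' n : ℕ, Set.indicator (GTset f ψ (T - M))
          (fun n => ENNReal.ofReal (∑ x ∈ E' n,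
            Real.exp (birkhoff f (fun x => φ x - β * ψ x) n x))) n) ≤
          Rsep f (fun x => φ x - β * ψ x) ψ (T - M) ε := by
        apply le_iSup₂ (f := fun (E : ℕ → Finset X)
          (_ : ∀ n ∈ GTset f ψ (T - M), (E n : Set X) ⊆ Yset f ψ (T - M) n ∧
            IsSeparatedSet f n ε (E n)) =>
          ∑' n : ℕ, Set.indicator (GTset f ψ (T - M))
            (fun n => ENNReal.ofReal (∑ x ∈ E n,
              Real.exp (birkhoff f (fun x => φ x - β * ψ x) n x))) n) E' hadm
      have hofr : ENNReal.ofReal r' ≤ Rsep f (fun x => φ x - β * ψ x) ψ (T - M) ε := by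
        refine le_trans ?_ hle
        rw [hr'def, ENNReal.ofReal_tsum_of_nonneg ?_ (summable_indicator_stset hm hm0 T w')]
        · apply ENNReal.tsum_le_tsum
          intro n
          by_cases hn : n ∈ STset f ψ T
          · have hnG : n ∈ GTset f ψ (T - M) := by
              obtain ⟨x₀, hx₀⟩ := hn
              refine ⟨x₀, ?_⟩
              have hsucc : birkhoff f ψ (n+1) x₀ = birkhoff f ψ n x₀ + ψ (f^[n] x₀) :=
                birkhoff_succ f ψ n x₀
              have := hM (f^[n] x₀)
              have := hx₀.2
              linarith
            rw [Set.indicator_of_mem hn, Set.indicator_of_mem hnG, hE'def]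
            simp only [if_pos hn]
            exact le_refl _
          · rw [Set.indicator_of_notMem hn]
            simp
        · intro n
          apply Set.indicator_nonneg
          intro n _
          exact Finset.sum_nonneg fun x _ => Real.exp_nonneg _
      have := le_trans hofr (le_of_lt hRT)
      rwa [ENNReal.ofReal_le_iff_le_toReal hK'top] at this
    -- positivity of Q
    have hQpos : 0 < Qspan f φ ψ T ε :=
      lt_of_lt_of_le (Real.exp_pos _) (Qspan_pos hm hm0 hf hc hc0 hTnn hε)
    -- conclude
    have hK0 : (0:ℝ) < K := lt_of_lt_of_le one_pos hK1
    have hQbound : Qspan f φ ψ T ε ≤ Real.exp (β * T + |β| * M) * K := by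
      calc Qspan f φ ψ T ε ≤ r := hQr
        _ ≤ Real.exp (β * T + |β| * M) * r' := hrr'
        _ ≤ Real.exp (β * T + |β| * M) * K := by
            apply mul_le_mul_of_nonneg_left hr'K (Real.exp_nonneg _)
    have hlog : Real.log (Qspan f φ ψ T ε) ≤ β * T + |β| * M + Real.log K := by
      calc Real.log (Qspan f φ ψ T ε) ≤ Real.log (Real.exp (β * T + |β| * M) * K) :=
        Real.log_le_log hQpos hQbound
      _ = β * T + |β| * M + Real.log K := by
          rw [Real.log_mul (Real.exp_ne_zero _) (ne_of_gt hK0), Real.log_exp]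
    have hTinv : (0:ℝ) ≤ T⁻¹ := inv_nonneg.2 hTnn
    have hTne : T ≠ 0 := ne_of_gt hT0
    calc T⁻¹ * Real.log (Qspan f φ ψ T ε) ≤ T⁻¹ * (β * T + C) :=
        mul_le_mul_of_nonneg_left (by rw [hCdef]; linarith) hTinv
      _ = β + C * T⁻¹ := by
          field_simp
  -- eventual bound in EReal
  have hev2 : ∀ᶠ T in (atTop : Filter ℝ),
      Rsep f (fun x => φ x - β * ψ x) ψ (T - M) ε < K' :=
    (tendsto_atTop_add_const_right atTop (-M) tendsto_id).eventually hev
  have hev3 : ∀ᶠ T in (atTop : Filter ℝ),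
      ((T⁻¹ * Real.log (Qspan f φ ψ T ε) : ℝ) : EReal) ≤ ((β + C * T⁻¹ : ℝ) : EReal) := by
    filter_upwards [eventually_ge_atTop (1:ℝ), hev2] with T hT1 hR
    exact_mod_cast EReal.coe_le_coe_iff.2 (hkey T hT1 (by simpa using hR))
  have hlim : Filter.Tendsto (fun T : ℝ => ((β + C * T⁻¹ : ℝ) : EReal)) atTop
      (nhds ((β : ℝ) : EReal)) := by
    have h1 : Filter.Tendsto (fun T : ℝ => β + C * T⁻¹) atTop (nhds β) := by
      have := (tendsto_inv_atTop_zero (𝕜 := ℝ)).const_mul C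
      simpa using tendsto_const_nhds.add this
    exact (continuous_coe_real_ereal.tendsto β).comp h1
  calc Filter.limsup (fun T : ℝ => ((T⁻¹ * Real.log (Qspan f φ ψ T ε) : ℝ) : EReal)) atTop
      ≤ Filter.limsup (fun T : ℝ => ((β + C * T⁻¹ : ℝ) : EReal)) atTop :=
        Filter.limsup_le_limsup hev3
    _ = ((β : ℝ) : EReal) := hlim.limsup_eq

end Dir2

section Dir1

variable [MetricSpace X] [CompactSpace X] [Nonempty X]

/-- Monotonicity of `Rsep` in `ε`. -/
lemma Rsep_mono (f : X → X) (φ' ψ : X → ℝ) (T : ℝ) {ε₀ ε : ℝ} (h : ε₀ ≤ ε) :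
    Rsep f φ' ψ T ε ≤ Rsep f φ' ψ T ε₀ := by
  apply iSup₂_le
  intro E hE
  apply le_iSup₂ (f := fun (E : ℕ → Finset X)
    (_ : ∀ n ∈ GTset f ψ T, (E n : Set X) ⊆ Yset f ψ T n ∧ IsSeparatedSet f n ε₀ (E n)) =>
    ∑' n : ℕ, Set.indicator (GTset f ψ T)
      (fun n => ENNReal.ofReal (∑ x ∈ E n, Real.exp (birkhoff f φ' n x))) n) E
  intro n hn
  obtain ⟨h1, h2⟩ := hE n hn
  exact ⟨h1, fun x hx y hy hxy => lt_of_le_of_lt h (h2 x hx y hy hxy)⟩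

/-- Core estimate for direction 1. -/
lemma core_estimate (f : X → X) (φ ψ : X → ℝ) (hf : Continuous f)
    (hpos : ∀ x, 0 < ψ x) (β β' : ℝ)
    {m₀ M : ℝ} (hm : ∀ y, m₀ ≤ ψ y) (hM : ∀ y, ψ y ≤ M) (hm0 : 0 < m₀)
    {γ₀ : ℝ} (hγ₀ : γ₀ = m₀ * (β - β') / 2) (hββ' : β' < β)
    {ε : ℝ} (hε : 0 < ε)
    (hmod : ∀ x y : X, dist x y ≤ ε / 2 → |φ x - φ y| ≤ γ₀)
    {T₀ T : ℝ} (hT : T₀ ≤ T)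
    (hQb : ∀ t : ℝ, T₀ ≤ t → Qspan f φ ψ t (ε/2) ≤ Real.exp (β' * t))
    (E : ℕ → Finset X)
    (hadm : ∀ n, (E n : Set X) ⊆ Yset f ψ T n ∧ IsSeparatedSet f n ε (E n)) :
    (∑' n : ℕ, Set.indicator (GTset f ψ T)
      (fun n => ENNReal.ofReal (∑ x ∈ E n,
        Real.exp (birkhoff f (fun x => φ x - β * ψ x) n x))) n) ≤
    ∑' k : ℕ, ENNReal.ofReal
      (2 * Real.exp (|β| * M) * Real.exp (-((β - β')/2) * (T + (k+1) * m₀))) := by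
  classical
  set δ : ℝ := β - β' with hδdef
  have hδ0 : 0 < δ := by rw [hδdef]; linarith
  have hγ0 : 0 ≤ γ₀ := by rw [hγ₀]; positivity
  set Tk : ℕ → ℝ := fun k => T + (k+1) * m₀ with hTkdef
  set w : ℕ → X → ℝ := fun n x => Real.exp (birkhoff f (fun x => φ x - β * ψ x) n x)
    with hwdef
  -- choose good spanning families for each k
  have hFex : ∀ k : ℕ, ∃ F : ℕ → Finset X,
      (∀ n ∈ STset f ψ (Tk k), IsSpanningSet f n (ε/2) (Xset f ψ (Tk k) n) (F n)) ∧
      (∑' n : ℕ, Set.indicator (STset f ψ (Tk k))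
        (fun n => ∑ x ∈ F n, Real.exp (birkhoff f φ n x)) n) ≤ 2 * Real.exp (β' * Tk k) := by
    intro k
    have hTkT : T₀ ≤ Tk k := by
      rw [hTkdef]
      simp only
      have : (0:ℝ) ≤ (k+1) * m₀ := by positivity
      linarith
    have hQlt : Qspan f φ ψ (Tk k) (ε/2) < 2 * Real.exp (β' * Tk k) := by
      have := hQb (Tk k) hTkT
      have hexp : (0:ℝ) < Real.exp (β' * Tk k) := Real.exp_pos _
      linarith
    obtain ⟨r, hrmem, hrlt⟩ := exists_lt_of_csInf_lt (Qset_nonempty hf (Tk k) (half_pos hε)) hQlt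
    obtain ⟨F, hFspan, rfl⟩ := hrmem
    exact ⟨F, hFspan, le_of_lt hrlt⟩
  choose F hFspan hFsum using hFex
  -- step (i): pointwise in n
  have hstep1 : ∀ n : ℕ, Set.indicator (GTset f ψ T)
      (fun n => ENNReal.ofReal (∑ x ∈ E n, w n x)) n ≤
      ∑' k : ℕ, Set.indicator (STset f ψ (Tk k))
        (fun n => ENNReal.ofReal (∑ x ∈ (E n).filter (· ∈ Xset f ψ (Tk k) n), w n x)) n := by
    intro n
    by_cases hn : n ∈ GTset f ψ T
    · rw [Set.indicator_of_mem hn]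
      have heq : ENNReal.ofReal (∑ x ∈ E n, w n x) = ∑ x ∈ E n, ENNReal.ofReal (w n x) :=
        ENNReal.ofReal_sum_of_nonneg fun x _ => Real.exp_nonneg _
      rw [heq]
      have hxk : ∀ x ∈ E n, ENNReal.ofReal (w n x) ≤
          ∑' k : ℕ, (if x ∈ Xset f ψ (Tk k) n then ENNReal.ofReal (w n x) else 0) := by
        intro x hx
        have hY : T < birkhoff f ψ n x := (hadm n).1 hx
        obtain ⟨k₀, hk₀⟩ := grid_exists hm hm0 hY
        calc ENNReal.ofReal (w n x)
            = (if x ∈ Xset f ψ (Tk k₀) n then ENNReal.ofReal (w n x) else 0) := by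
              rw [if_pos hk₀]
          _ ≤ _ := ENNReal.le_tsum k₀
      calc ∑ x ∈ E n, ENNReal.ofReal (w n x)
          ≤ ∑ x ∈ E n, ∑' k : ℕ, (if x ∈ Xset f ψ (Tk k) n
              then ENNReal.ofReal (w n x) else 0) := Finset.sum_le_sum hxk
        _ = ∑' k : ℕ, ∑ x ∈ E n, (if x ∈ Xset f ψ (Tk k) n
              then ENNReal.ofReal (w n x) else 0) :=
            (Summable.tsum_finsetSum fun x _ => ENNReal.summable).symm
        _ ≤ ∑' k : ℕ, Set.indicator (STset f ψ (Tk k))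
            (fun n => ENNReal.ofReal (∑ x ∈ (E n).filter (· ∈ Xset f ψ (Tk k) n), w n x)) n := by
            apply ENNReal.tsum_le_tsum
            intro k
            rw [← Finset.sum_filter]
            by_cases hne : ((E n).filter (· ∈ Xset f ψ (Tk k) n)).Nonempty
            · obtain ⟨x₀, hx₀⟩ := hne
              have hx₀' := (Finset.mem_filter.1 hx₀).2
              have hnS : n ∈ STset f ψ (Tk k) := ⟨x₀, hx₀'.1, hx₀'.2⟩
              rw [Set.indicator_of_mem hnS,
                ENNReal.ofReal_sum_of_nonneg fun x _ => Real.exp_nonneg _]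
            · rw [Finset.not_nonempty_iff_eq_empty.1 hne]
              simp
    · rw [Set.indicator_of_notMem hn]
      exact zero_le
  -- step (iii): per-k bound
  have hstep3 : ∀ k : ℕ, (∑' n : ℕ, Set.indicator (STset f ψ (Tk k))
      (fun n => ENNReal.ofReal (∑ x ∈ (E n).filter (· ∈ Xset f ψ (Tk k) n), w n x)) n) ≤
      ENNReal.ofReal (2 * Real.exp (|β| * M) * Real.exp (-(δ/2) * Tk k)) := by
    intro k
    -- per n bound
    have hnb : ∀ n ∈ STset f ψ (Tk k),
        (∑ x ∈ (E n).filter (· ∈ Xset f ψ (Tk k) n), w n x) ≤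
        Real.exp (-β * Tk k + |β| * M + γ₀ / m₀ * Tk k) *
          ∑ y ∈ F k n, Real.exp (birkhoff f φ n y) := by
      intro n hnS
      have hnle : (n : ℝ) * γ₀ ≤ Tk k / m₀ * γ₀ := by
        apply mul_le_mul_of_nonneg_right _ hγ0
        exact (le_div_iff₀ hm0).2 (stset_le hm hnS)
      have hsep' : IsSeparatedSet f n ε ((E n).filter (· ∈ Xset f ψ (Tk k) n)) := by
        intro x hx y hy hxy
        exact (hadm n).2 x (Finset.mem_filter.1 hx).1 y (Finset.mem_filter.1 hy).1 hxy
      have hsub' : ((E n).filter (· ∈ Xset f ψ (Tk k) n) : Set X) ⊆ Xset f ψ (Tk k) n := by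
        intro x hx
        exact (Finset.mem_filter.1 hx).2
      have hcomp := sum_exp_le_of_separated_spanning hε hγ0 hmod hsub' hsep'
        (hFspan k n hnS)
      -- first: w ≤ exp(-βTk + |β|M) * exp(S_n φ)
      have hw1 : ∀ x ∈ (E n).filter (· ∈ Xset f ψ (Tk k) n),
          w n x ≤ Real.exp (-β * Tk k + |β| * M) * Real.exp (birkhoff f φ n x) := by
        intro x hx
        have hxX : x ∈ Xset f ψ (Tk k) n := (Finset.mem_filter.1 hx).2
        obtain ⟨hx1, hx2⟩ := hxX
        have hβb : -β * birkhoff f ψ n x ≤ -β * Tk k + |β| * M := by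
          rcases le_or_gt 0 β with hβ | hβ
          · have hS : Tk k - M < birkhoff f ψ n x := by
              have hsucc := birkhoff_succ f ψ n x
              have := hM (f^[n] x)
              linarith
            have h1 : β * (Tk k - M) ≤ β * birkhoff f ψ n x :=
              mul_le_mul_of_nonneg_left (le_of_lt hS) hβ
            rw [abs_of_nonneg hβ]
            linarith
          · have h1 : -β * birkhoff f ψ n x ≤ -β * Tk k :=
              mul_le_mul_of_nonneg_left hx1 (by linarith)
            have h2 : (0:ℝ) ≤ |β| * M := mul_nonneg (abs_nonneg _)
              (le_trans (le_of_lt (hpos (Classical.arbitrary X))) (hM _))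
            linarith
        rw [hwdef]
        simp only
        rw [birkhoff_sub, sub_eq_add_neg, ← neg_mul, Real.exp_add]
        rw [mul_comm (Real.exp (birkhoff f φ n x))]
        apply mul_le_mul_of_nonneg_right _ (Real.exp_nonneg _)
        exact Real.exp_le_exp.2 hβb
      calc (∑ x ∈ (E n).filter (· ∈ Xset f ψ (Tk k) n), w n x)
          ≤ ∑ x ∈ (E n).filter (· ∈ Xset f ψ (Tk k) n),
              Real.exp (-β * Tk k + |β| * M) * Real.exp (birkhoff f φ n x) :=
            Finset.sum_le_sum hw1
        _ = Real.exp (-β * Tk k + |β| * M) *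
              ∑ x ∈ (E n).filter (· ∈ Xset f ψ (Tk k) n), Real.exp (birkhoff f φ n x) := by
            rw [Finset.mul_sum]
        _ ≤ Real.exp (-β * Tk k + |β| * M) *
              (Real.exp ((n:ℝ) * γ₀) * ∑ y ∈ F k n, Real.exp (birkhoff f φ n y)) :=
            mul_le_mul_of_nonneg_left hcomp (Real.exp_nonneg _)
        _ ≤ Real.exp (-β * Tk k + |β| * M + γ₀ / m₀ * Tk k) *
              ∑ y ∈ F k n, Real.exp (birkhoff f φ n y) := by
            rw [← mul_assoc, ← Real.exp_add]
            apply mul_le_mul_of_nonneg_right _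
              (Finset.sum_nonneg fun y _ => Real.exp_nonneg _)
            apply Real.exp_le_exp.2
            have : Tk k / m₀ * γ₀ = γ₀ / m₀ * Tk k := by ring
            linarith [hnle, this]
    -- sum over n
    calc (∑' n : ℕ, Set.indicator (STset f ψ (Tk k))
        (fun n => ENNReal.ofReal (∑ x ∈ (E n).filter (· ∈ Xset f ψ (Tk k) n), w n x)) n)
        ≤ ∑' n : ℕ, Set.indicator (STset f ψ (Tk k))
            (fun n => ENNReal.ofReal (Real.exp (-β * Tk k + |β| * M + γ₀ / m₀ * Tk k) *
              ∑ y ∈ F k n, Real.exp (birkhoff f φ n y))) n := by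
          apply ENNReal.tsum_le_tsum
          intro n
          by_cases hn : n ∈ STset f ψ (Tk k)
          · rw [Set.indicator_of_mem hn, Set.indicator_of_mem hn]
            exact ENNReal.ofReal_le_ofReal (hnb n hn)
          · rw [Set.indicator_of_notMem hn, Set.indicator_of_notMem hn]
      _ = ENNReal.ofReal (Real.exp (-β * Tk k + |β| * M + γ₀ / m₀ * Tk k)) *
            ∑' n : ℕ, Set.indicator (STset f ψ (Tk k))
              (fun n => ENNReal.ofReal (∑ y ∈ F k n, Real.exp (birkhoff f φ n y))) n := by
          rw [← ENNReal.tsum_mul_left]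
          congr 1
          ext n
          by_cases hn : n ∈ STset f ψ (Tk k)
          · rw [Set.indicator_of_mem hn, Set.indicator_of_mem hn,
              ENNReal.ofReal_mul (Real.exp_nonneg _)]
          · rw [Set.indicator_of_notMem hn, Set.indicator_of_notMem hn, mul_zero]
      _ ≤ ENNReal.ofReal (Real.exp (-β * Tk k + |β| * M + γ₀ / m₀ * Tk k)) *
            ENNReal.ofReal (2 * Real.exp (β' * Tk k)) := by
          apply mul_le_mul_right _ _
          have hconv : (∑' n : ℕ, Set.indicator (STset f ψ (Tk k))
              (fun n => ENNReal.ofReal (∑ y ∈ F k n, Real.exp (birkhoff f φ n y))) n) =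
              ENNReal.ofReal (∑' n : ℕ, Set.indicator (STset f ψ (Tk k))
                (fun n => ∑ y ∈ F k n, Real.exp (birkhoff f φ n y)) n) := by
            rw [ENNReal.ofReal_tsum_of_nonneg (f := fun n => Set.indicator (STset f ψ (Tk k))
                (fun n => ∑ y ∈ F k n, Real.exp (birkhoff f φ n y)) n)
              (fun n => Set.indicator_nonneg
                (fun n _ => Finset.sum_nonneg fun y _ => Real.exp_nonneg _) n)
              (summable_indicator_stset hm hm0 (Tk k) _)]
            apply tsum_congr
            intro n
            by_cases hn : n ∈ STset f ψ (Tk k)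
            · rw [Set.indicator_of_mem hn, Set.indicator_of_mem hn]
            · rw [Set.indicator_of_notMem hn, Set.indicator_of_notMem hn, ENNReal.ofReal_zero]
          rw [hconv]
          exact ENNReal.ofReal_le_ofReal (hFsum k)
      _ = ENNReal.ofReal (Real.exp (-β * Tk k + |β| * M + γ₀ / m₀ * Tk k) *
            (2 * Real.exp (β' * Tk k))) := by
          rw [ENNReal.ofReal_mul (Real.exp_nonneg _)]
      _ ≤ ENNReal.ofReal (2 * Real.exp (|β| * M) * Real.exp (-(δ/2) * Tk k)) := by
          apply ENNReal.ofReal_le_ofReal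
          have hγm : γ₀ / m₀ = δ / 2 := by
            rw [hγ₀, hδdef]
            field_simp
          rw [Real.exp_add, Real.exp_add, hγm]
          calc Real.exp (-β * Tk k) * Real.exp (|β| * M) * Real.exp (δ/2 * Tk k) *
                (2 * Real.exp (β' * Tk k))
              = 2 * Real.exp (|β| * M) *
                  (Real.exp (-β * Tk k) * Real.exp (δ/2 * Tk k) * Real.exp (β' * Tk k)) := by
                ring
            _ = 2 * Real.exp (|β| * M) * Real.exp (-(δ/2) * Tk k) := by
                rw [← Real.exp_add, ← Real.exp_add]
                congr 2
                rw [hδdef]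
                ring
            _ ≤ 2 * Real.exp (|β| * M) * Real.exp (-(δ/2) * Tk k) := le_refl _
  -- assemble
  calc (∑' n : ℕ, Set.indicator (GTset f ψ T)
      (fun n => ENNReal.ofReal (∑ x ∈ E n, w n x)) n)
      ≤ ∑' n : ℕ, ∑' k : ℕ, Set.indicator (STset f ψ (Tk k))
          (fun n => ENNReal.ofReal (∑ x ∈ (E n).filter (· ∈ Xset f ψ (Tk k) n), w n x)) n :=
        ENNReal.tsum_le_tsum hstep1
    _ = ∑' k : ℕ, ∑' n : ℕ, Set.indicator (STset f ψ (Tk k))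
          (fun n => ENNReal.ofReal (∑ x ∈ (E n).filter (· ∈ Xset f ψ (Tk k) n), w n x)) n :=
        ENNReal.tsum_comm
    _ ≤ ∑' k : ℕ, ENNReal.ofReal
          (2 * Real.exp (|β| * M) * Real.exp (-(δ/2) * Tk k)) :=
        ENNReal.tsum_le_tsum hstep3

end Dir1

section Dir1b

variable [MetricSpace X] [CompactSpace X] [Nonempty X]

lemma direction1 (f : X → X) (φ ψ : X → ℝ) (hf : Continuous f) (hφ : Continuous φ)
    (hψ : Continuous ψ) (hpos : ∀ x, 0 < ψ x) (β : ℝ)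
    (hβ : inducedPressure f φ ψ < (β : EReal)) :
    (⨆ (ε : ℝ) (_ : 0 < ε),
        Filter.limsup (fun T : ℝ => Rsep f (fun x => φ x - β * ψ x) ψ T ε) atTop) < ⊤ := by
  classical
  obtain ⟨xm, -, hxm⟩ := isCompact_univ.exists_isMinOn Set.univ_nonempty hψ.continuousOn
  obtain ⟨xM, -, hxM⟩ := isCompact_univ.exists_isMaxOn Set.univ_nonempty hψ.continuousOn
  set m₀ : ℝ := ψ xm with hm₀def
  set M : ℝ := ψ xM with hMdef
  have hm : ∀ y, m₀ ≤ ψ y := fun y => hxm (Set.mem_univ y)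
  have hM : ∀ y, ψ y ≤ M := fun y => hxM (Set.mem_univ y)
  have hm0 : 0 < m₀ := hpos xm
  obtain ⟨β', hPβ', hβ'β⟩ := EReal.exists_between_coe_real hβ
  have hββ' : β' < β := EReal.coe_lt_coe_iff.1 hβ'β
  have hδ0 : 0 < β - β' := by linarith
  set γ₀ : ℝ := m₀ * (β - β') / 2 with hγ₀def
  have hγ₀0 : 0 < γ₀ := by positivity
  -- modulus of continuity for φ
  have huc := CompactSpace.uniformContinuous_of_continuous hφ
  obtain ⟨d, hd0, hdlt⟩ := Metric.uniformContinuous_iff.1 huc γ₀ hγ₀0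
  set ε₀ : ℝ := d / 2 with hε₀def
  have hε₀0 : 0 < ε₀ := by positivity
  have hmod₀ : ∀ x y : X, dist x y ≤ ε₀ → |φ x - φ y| ≤ γ₀ := by
    intro x y hxy
    have := hdlt (lt_of_le_of_lt hxy (by rw [hε₀def]; linarith))
    rw [Real.dist_eq] at this
    exact le_of_lt this
  -- main claim for small ε
  have claim : ∀ ε : ℝ, 0 < ε → ε ≤ ε₀ →
      Filter.limsup (fun T : ℝ => Rsep f (fun x => φ x - β * ψ x) ψ T ε) atTop ≤ 0 := by
    intro ε hε hεε₀
    have hmod : ∀ x y : X, dist x y ≤ ε / 2 → |φ x - φ y| ≤ γ₀ := by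
      intro x y hxy
      exact hmod₀ x y (le_trans hxy (by linarith))
    -- eventual Q bound
    have hPle : Filter.limsup
        (fun T : ℝ => ((T⁻¹ * Real.log (Qspan f φ ψ T (ε/2)) : ℝ) : EReal)) atTop <
        (β' : EReal) := by
      apply lt_of_le_of_lt _ hPβ'
      exact le_iSup₂ (f := fun (e : ℝ) (_ : 0 < e) => Filter.limsup
        (fun T : ℝ => ((T⁻¹ * Real.log (Qspan f φ ψ T e) : ℝ) : EReal)) atTop)
        (ε/2) (half_pos hε)
    have hevQ := Filter.eventually_lt_of_limsup_lt hPle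
    have hev1 : ∀ᶠ T : ℝ in atTop, (1:ℝ) ≤ T := eventually_ge_atTop 1
    obtain ⟨T₀, hT₀⟩ := (hevQ.and hev1).exists_forall_of_atTop
    have hQb : ∀ t : ℝ, T₀ ≤ t → Qspan f φ ψ t (ε/2) ≤ Real.exp (β' * t) := by
      intro t ht
      obtain ⟨h1, h2⟩ := hT₀ t ht
      have ht0 : (0:ℝ) < t := lt_of_lt_of_le one_pos h2
      have h1' : t⁻¹ * Real.log (Qspan f φ ψ t (ε/2)) < β' := EReal.coe_lt_coe_iff.1 h1
      have hlog : Real.log (Qspan f φ ψ t (ε/2)) < β' * t := by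
        have := mul_lt_mul_of_pos_left h1' ht0
        rw [← mul_assoc, mul_inv_cancel₀ (ne_of_gt ht0), one_mul] at this
        linarith
      rcases le_or_gt (Qspan f φ ψ t (ε/2)) 0 with hQ | hQ
      · exact le_trans hQ (le_of_lt (Real.exp_pos _))
      · calc Qspan f φ ψ t (ε/2) = Real.exp (Real.log (Qspan f φ ψ t (ε/2))) :=
            (Real.exp_log hQ).symm
          _ ≤ Real.exp (β' * t) := Real.exp_le_exp.2 (le_of_lt hlog)
    -- the dominating function
    set g : ℝ → ENNReal := fun T => ∑' k : ℕ, ENNReal.ofReal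
      (2 * Real.exp (|β| * M) * Real.exp (-(((β - β')/2)) * (T + (k+1) * m₀))) with hgdef
    have hbd : ∀ᶠ T : ℝ in atTop, Rsep f (fun x => φ x - β * ψ x) ψ T ε ≤ g T := by
      filter_upwards [eventually_ge_atTop T₀] with T hT
      apply iSup₂_le
      intro E hE
      set E' : ℕ → Finset X := fun n => if n ∈ GTset f ψ T then E n else ∅ with hE'def
      have hadm : ∀ n, (E' n : Set X) ⊆ Yset f ψ T n ∧ IsSeparatedSet f n ε (E' n) := by
        intro n
        rw [hE'def]
        by_cases hn : n ∈ GTset f ψ T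
        · simp only [if_pos hn]; exact hE n hn
        · simp only [if_neg hn]
          exact ⟨by simp, fun x hx => by simp at hx⟩
      have heq : (∑' n : ℕ, Set.indicator (GTset f ψ T)
          (fun n => ENNReal.ofReal (∑ x ∈ E n,
            Real.exp (birkhoff f (fun x => φ x - β * ψ x) n x))) n) =
          ∑' n : ℕ, Set.indicator (GTset f ψ T)
          (fun n => ENNReal.ofReal (∑ x ∈ E' n,
            Real.exp (birkhoff f (fun x => φ x - β * ψ x) n x))) n := by
        apply tsum_congr
        intro n
        by_cases hn : n ∈ GTset f ψ T
        · rw [Set.indicator_of_mem hn, Set.indicator_of_mem hn, hE'def]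
          simp only [if_pos hn]
        · rw [Set.indicator_of_notMem hn, Set.indicator_of_notMem hn]
      rw [heq]
      have := core_estimate f φ ψ hf hpos β β' hm hM hm0
        (by rw [hγ₀def]) hββ' hε hmod hT hQb E' hadm
      exact this
    -- structure of g and its limit
    set ρ : ℝ := Real.exp (-(((β - β')/2)) * m₀) with hρdef
    have hρ0 : 0 ≤ ρ := Real.exp_nonneg _
    have hρ1 : ρ < 1 := by
      rw [hρdef]
      apply Real.exp_lt_one_iff.2
      have : (0:ℝ) < ((β - β')/2) * m₀ := by positivity
      linarith
    set S : ENNReal := ∑' k : ℕ, (ENNReal.ofReal ρ) ^ (k+1) with hSdef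
    have hStop : S ≠ ⊤ := by
      have hS : S = (∑' k : ℕ, (ENNReal.ofReal ρ) ^ k) * ENNReal.ofReal ρ := by
        rw [hSdef]
        simp_rw [pow_succ]
        exact ENNReal.tsum_mul_right
      rw [hS, ENNReal.tsum_geometric]
      apply ENNReal.mul_ne_top _ ENNReal.ofReal_ne_top
      apply ENNReal.inv_ne_top.2
      rw [ne_eq, tsub_eq_zero_iff_le, ← ENNReal.ofReal_one]
      exact not_le.2 (by
        apply ENNReal.ofReal_lt_ofReal_iff_of_nonneg hρ0 |>.2 hρ1)
    set c : ENNReal := ENNReal.ofReal (2 * Real.exp (|β| * M)) * S with hcdef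
    have hctop : c ≠ ⊤ := ENNReal.mul_ne_top ENNReal.ofReal_ne_top hStop
    have hterm : ∀ (T : ℝ) (k : ℕ), ENNReal.ofReal
        (2 * Real.exp (|β| * M) * Real.exp (-(((β - β')/2)) * (T + (k+1) * m₀))) =
        (ENNReal.ofReal (2 * Real.exp (|β| * M)) * ENNReal.ofReal (Real.exp (-(((β - β')/2)) * T))) *
          (ENNReal.ofReal ρ) ^ (k+1) := by
      intro T k
      have hexp : -(((β - β')/2)) * (T + ((k:ℝ)+1) * m₀) =
          -(((β - β')/2)) * T + ((k+1 : ℕ) : ℝ) * (-(((β - β')/2)) * m₀) := by push_cast; ring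
      rw [hexp, Real.exp_add, Real.exp_nat_mul, ← hρdef]
      rw [ENNReal.ofReal_mul (by positivity), ENNReal.ofReal_mul (Real.exp_nonneg _),
        ENNReal.ofReal_pow hρ0, mul_assoc]
    have hgc : ∀ T : ℝ, g T = c * ENNReal.ofReal (Real.exp (-(((β - β')/2)) * T)) := by
      intro T
      rw [hgdef, hcdef]
      simp only
      calc (∑' k : ℕ, ENNReal.ofReal
          (2 * Real.exp (|β| * M) * Real.exp (-(((β - β')/2)) * (T + (k+1) * m₀))))
          = ∑' k : ℕ, (ENNReal.ofReal (2 * Real.exp (|β| * M)) *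
              ENNReal.ofReal (Real.exp (-(((β - β')/2)) * T))) * (ENNReal.ofReal ρ) ^ (k+1) :=
            tsum_congr fun k => hterm T k
        _ = (ENNReal.ofReal (2 * Real.exp (|β| * M)) *
              ENNReal.ofReal (Real.exp (-(((β - β')/2)) * T))) * S := by
            rw [ENNReal.tsum_mul_left, hSdef]
        _ = ENNReal.ofReal (2 * Real.exp (|β| * M)) * S *
              ENNReal.ofReal (Real.exp (-(((β - β')/2)) * T)) := by ring
    have hreal : Filter.Tendsto (fun T : ℝ => Real.exp (-(((β - β')/2)) * T)) atTop (nhds 0) := by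
      have h2 : Filter.Tendsto (fun T : ℝ => ((β - β')/2) * T) atTop atTop :=
        Filter.Tendsto.const_mul_atTop (half_pos hδ0) tendsto_id
      have h3 : Filter.Tendsto (fun T : ℝ => -(((β - β')/2) * T)) atTop atBot :=
        tendsto_neg_atTop_atBot.comp h2
      have h4 := Real.tendsto_exp_atBot.comp h3
      apply h4.congr
      intro T
      simp [Function.comp, neg_mul]
    have hofR : Filter.Tendsto (fun T : ℝ => ENNReal.ofReal (Real.exp (-(((β - β')/2)) * T))) atTop
        (nhds 0) := by
      have := ENNReal.tendsto_ofReal hreal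
      simpa using this
    have hg0 : Filter.Tendsto g atTop (nhds 0) := by
      have h5 : Filter.Tendsto (fun T : ℝ => c * ENNReal.ofReal (Real.exp (-(((β - β')/2)) * T))) atTop
          (nhds (c * 0)) := ENNReal.Tendsto.const_mul hofR (Or.inr hctop)
      rw [mul_zero] at h5
      exact Filter.Tendsto.congr (fun T => (hgc T).symm) h5
    calc Filter.limsup (fun T : ℝ => Rsep f (fun x => φ x - β * ψ x) ψ T ε) atTop
        ≤ Filter.limsup g atTop := Filter.limsup_le_limsup hbd
      _ = 0 := hg0.limsup_eq
  -- conclude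
  have hfinal : ∀ ε : ℝ, 0 < ε →
      Filter.limsup (fun T : ℝ => Rsep f (fun x => φ x - β * ψ x) ψ T ε) atTop ≤ 0 := by
    intro ε hε
    rcases le_or_gt ε ε₀ with h | h
    · exact claim ε hε h
    · calc Filter.limsup (fun T : ℝ => Rsep f (fun x => φ x - β * ψ x) ψ T ε) atTop
          ≤ Filter.limsup (fun T : ℝ => Rsep f (fun x => φ x - β * ψ x) ψ T ε₀) atTop :=
            Filter.limsup_le_limsup (Filter.Eventually.of_forall fun T =>
              Rsep_mono f _ ψ T (le_of_lt h))
        _ ≤ 0 := claim ε₀ hε₀0 (le_refl _)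
  apply lt_of_le_of_lt (iSup₂_le fun ε hε => hfinal ε hε)
  exact ENNReal.zero_lt_top

end Dir1b

/-- `P_ψ(φ) = inf{β : lim_{ε→0} limsup_T R_{ψ,T}(f, φ-βψ, ε) < ∞}` (inf ∅ = ∞). -/

theorem stmt6 [MetricSpace X] [CompactSpace X] [Nonempty X]
    (f : X → X) (φ ψ : X → ℝ) (hf : Continuous f) (hφ : Continuous φ) (hψ : Continuous ψ)
    (hpos : ∀ x, 0 < ψ x) :
    inducedPressure f φ ψ =
      sInf { b : EReal | ∃ β : ℝ, b = (β : EReal) ∧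
        (⨆ (ε : ℝ) (_ : 0 < ε),
          Filter.limsup (fun T : ℝ => Rsep f (fun x => φ x - β * ψ x) ψ T ε) atTop) < ⊤ } := by
  apply le_antisymm
  · apply le_sInf
    rintro b ⟨β, rfl, hcond⟩
    exact direction2 f φ ψ hf hφ hψ hpos β hcond
  · by_contra h
    push_neg at h
    obtain ⟨c, hc1, hc2⟩ := EReal.exists_between_coe_real h
    have hmem : (c : EReal) ∈ { b : EReal | ∃ β : ℝ, b = (β : EReal) ∧
        (⨆ (ε : ℝ) (_ : 0 < ε),
          Filter.limsup (fun T : ℝ => Rsep f (fun x => φ x - β * ψ x) ψ T ε) atTop) < ⊤ } :=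
      ⟨c, rfl, direction1 f φ ψ hf hφ hψ hpos c hc1⟩
    exact absurd (sInf_le hmem) (not_le.2 hc2)
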